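/- arXiv:1108.5367 — 3 statements merged into one kernel-verified Lean document; each statement's English description precedes it below -/
import Mathlib

section
/- Let E be a finite-dimensional complex vector space equipped with two ascending exhaustive filtrations 'F and ''F. Define the bifiltration F_{i,j}E = 'F_i E ∩ ''F_j E and the Rees module R(E) = ⊕_{i,j≥0} τ₁^i τ₂^j · F_{i,j}E ⊂ ℂ[τ₁,τ₂] ⊗ E. Then R(E) is a free ℂ[τ₁,τ₂]-module of rank dim E. -/
open scoped TensorProduct

/-- The Rees module of the bifiltration `F_{i,j} E = 'F_i E ⊓ ''F_j E` attached to a pair of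
ascending filtrations on `E`, realized as the `ℂ[τ₁,τ₂]`-submodule of `ℂ[τ₁,τ₂] ⊗ E`
spanned by the elements `τ₁^i τ₂^j ⊗ v` with `v ∈ 'F_i E ⊓ ''F_j E`. -/
noncomputable def reesModule {E : Type*} [AddCommGroup E] [Module ℂ E]
    (F G : ℕ → Submodule ℂ E) :
    Submodule (MvPolynomial (Fin 2) ℂ) (MvPolynomial (Fin 2) ℂ ⊗[ℂ] E) :=
  Submodule.span (MvPolynomial (Fin 2) ℂ)
    {x | ∃ (i j : ℕ) (v : E), v ∈ F i ⊓ G j ∧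
      x = (MvPolynomial.monomial (Finsupp.single 0 i + Finsupp.single 1 j) (1 : ℂ)) ⊗ₜ[ℂ] v}


section Aux

open Submodule Module

variable {E : Type*} [AddCommGroup E] [Module ℂ E] [FiniteDimensional ℂ E]

theorem my_exists_top_of_monotone (F : ℕ → Submodule ℂ E) (hF : Monotone F)
    (h : ⨆ i, F i = ⊤) : ∃ n, F n = ⊤ := by
  obtain ⟨n, hn⟩ := monotone_stabilizes_iff_noetherian.mpr inferInstance ⟨F, hF⟩
  refine ⟨n, le_antisymm le_top ?_⟩
  rw [← h]
  refine iSup_le fun i => ?_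
  rcases le_total i n with hin | hni
  · exact hF hin
  · exact (hn i hni).ge

theorem my_exists_compl_within {X Y : Submodule ℂ E} (h : X ≤ Y) :
    ∃ Z : Submodule ℂ E, Z ≤ Y ∧ X ⊔ Z = Y ∧ X ⊓ Z = ⊥ := by
  obtain ⟨Z', hZ'⟩ := (X.comap Y.subtype).exists_isCompl
  have hX : Submodule.map Y.subtype (X.comap Y.subtype) = X := by
    rw [Submodule.map_comap_subtype, inf_eq_right.mpr h]
  refine ⟨Z'.map Y.subtype, map_subtype_le Y Z', ?_, ?_⟩
  · rw [← hX, ← Submodule.map_sup, hZ'.codisjoint.eq_top, Submodule.map_subtype_top]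
  · rw [← hX, ← Submodule.map_inf _ Y.injective_subtype, hZ'.disjoint.eq_bot, Submodule.map_bot]

set_option maxHeartbeats 1000000 in
theorem my_exists_adapted_basis (F G : ℕ → Submodule ℂ E) (hF : Monotone F) (hG : Monotone G)
    (hFexh : ⨆ i, F i = ⊤) (hGexh : ⨆ j, G j = ⊤) :
    ∃ (ι : Type) (_ : Fintype ι) (e : Basis ι ℂ E) (a b : ι → ℕ),
      ∀ p q : ℕ, F p ⊓ G q = Submodule.span ℂ (⇑e '' {k | a k ≤ p ∧ b k ≤ q}) := by
  obtain ⟨nF, hnF⟩ := my_exists_top_of_monotone F hF hFexh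
  obtain ⟨nG, hnG⟩ := my_exists_top_of_monotone G hG hGexh
  obtain ⟨N, hFN, hGN⟩ : ∃ N, F N = ⊤ ∧ G N = ⊤ :=
    ⟨max nF nG, eq_top_iff.mpr (hnF ▸ hF (le_max_left _ _)),
      eq_top_iff.mpr (hnG ▸ hG (le_max_right _ _))⟩
  obtain ⟨F', hF'0, hF's⟩ : ∃ F' : ℕ → Submodule ℂ E, F' 0 = ⊥ ∧ ∀ i, F' (i+1) = F i :=
    ⟨fun i => match i with | 0 => ⊥ | (i+1) => F i, rfl, fun _ => rfl⟩
  obtain ⟨G', hG'0, hG's⟩ : ∃ G' : ℕ → Submodule ℂ E, G' 0 = ⊥ ∧ ∀ j, G' (j+1) = G j :=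
    ⟨fun j => match j with | 0 => ⊥ | (j+1) => G j, rfl, fun _ => rfl⟩
  have hF' : Monotone F' := monotone_nat_of_le_succ (by
    rintro (_|i)
    · rw [hF'0]; exact bot_le
    · rw [hF's, hF's]; exact hF (Nat.le_succ i))
  have hG' : Monotone G' := monotone_nat_of_le_succ (by
    rintro (_|j)
    · rw [hG'0]; exact bot_le
    · rw [hG's, hG's]; exact hG (Nat.le_succ j))
  obtain ⟨P, hP⟩ : ∃ P : ℕ → ℕ → Submodule ℂ E, ∀ i j, P i j = F' i ⊓ G' j :=
    ⟨_, fun _ _ => rfl⟩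
  have hPmono : ∀ {i i' j j'}, i ≤ i' → j ≤ j' → P i j ≤ P i' j' := by
    intro i i' j j' hi hj
    rw [hP, hP]
    exact inf_le_inf (hF' hi) (hG' hj)
  have hP0 : ∀ j, P 0 j = ⊥ := fun j => by rw [hP, hF'0, bot_inf_eq]
  have hP0' : ∀ i, P i 0 = ⊥ := fun i => by rw [hP, hG'0, inf_bot_eq]
  obtain ⟨B, hB⟩ : ∃ B : ℕ → ℕ → Submodule ℂ E, ∀ i j, B i j = P (i-1) j ⊔ P i (j-1) :=
    ⟨_, fun _ _ => rfl⟩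
  have hBP : ∀ i j, B i j ≤ P i j := fun i j => by
    rw [hB]
    exact sup_le (hPmono (Nat.pred_le i) le_rfl) (hPmono le_rfl (Nat.pred_le j))
  choose C hC1 hC2 hC3 using fun i j => my_exists_compl_within (hBP i j)
  obtain ⟨d, hd⟩ : ∃ d : ℕ → ℕ → ℕ, ∀ i j, d i j = finrank ℂ (P i j) := ⟨_, fun _ _ => rfl⟩
  obtain ⟨c, hc⟩ : ∃ c : ℕ → ℕ → ℕ, ∀ i j, c i j = finrank ℂ (C i j) := ⟨_, fun _ _ => rfl⟩
  have hd0 : ∀ i, d i 0 = 0 := fun i => by rw [hd, hP0']; exact finrank_bot ℂ E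
  have hd0' : ∀ j, d 0 j = 0 := fun j => by rw [hd, hP0]; exact finrank_bot ℂ E
  -- dimension identity
  have hdim : ∀ i j, (c (i+1) (j+1) : ℤ)
      = (d (i+1) (j+1) : ℤ) - d i (j+1) - d (i+1) j + d i j := by
    intro i j
    have e1 : finrank ℂ (B (i+1) (j+1)) + c (i+1) (j+1) = d (i+1) (j+1) := by
      have h5 := Submodule.finrank_sup_add_finrank_inf_eq (B (i+1) (j+1)) (C (i+1) (j+1))
      rw [hC2, hC3, finrank_bot, add_zero, hd, hc] at *
      exact h5.symm
    have hinf : P i (j+1) ⊓ P (i+1) j = P i j := by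
      rw [hP, hP, hP]
      exact le_antisymm
        (le_inf (inf_le_left.trans inf_le_left) (inf_le_right.trans inf_le_right))
        (le_inf (le_inf inf_le_left (inf_le_right.trans (hG' (Nat.le_succ j))))
          (le_inf (inf_le_left.trans (hF' (Nat.le_succ i))) inf_le_right))
    have e2 : finrank ℂ (B (i+1) (j+1)) + d i j = d i (j+1) + d (i+1) j := by
      have h6 := Submodule.finrank_sup_add_finrank_inf_eq (P i (j+1)) (P (i+1) j)
      rw [hinf] at h6
      have hBe : B (i+1) (j+1) = P i (j+1) ⊔ P (i+1) j := by
        rw [hB, Nat.add_sub_cancel, Nat.add_sub_cancel]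
      rw [hBe, hd, hd, hd]
      exact h6
    omega
  -- total dimension
  have htot : ∑ i ∈ Finset.range (N+1), ∑ j ∈ Finset.range (N+1), c (i+1) (j+1)
      = finrank ℂ E := by
    have hcol : ∀ i n, ∑ j ∈ Finset.range n, (c (i+1) (j+1) : ℤ)
        = (d (i+1) n : ℤ) - d i n := by
      intro i n
      have h7 := Finset.sum_range_sub (fun j => (d (i+1) j : ℤ) - d i j) n
      simp only [hd0, Nat.cast_zero, sub_zero, sub_self] at h7
      rw [← h7]
      exact Finset.sum_congr rfl (fun j _ => by rw [hdim i j]; ring)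
    have hZ : (∑ i ∈ Finset.range (N+1), ∑ j ∈ Finset.range (N+1), (c (i+1) (j+1) : ℤ))
        = (d (N+1) (N+1) : ℤ) := by
      have h8 := Finset.sum_range_sub (fun i => (d i (N+1) : ℤ)) (N+1)
      simp only [hd0', Nat.cast_zero, sub_zero] at h8
      rw [← h8]
      exact Finset.sum_congr rfl (fun i _ => hcol i (N+1))
    have hdNN : d (N+1) (N+1) = finrank ℂ E := by
      have h9 : P (N+1) (N+1) = ⊤ := by
        rw [hP, hF's, hG's, hFN, hGN, top_inf_eq]
      rw [hd, h9]
      exact finrank_top ℂ E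
    rw [hdNN] at hZ
    exact_mod_cast hZ
  classical
  -- bases of the graded pieces
  have bas : ∀ i j : ℕ, Basis (Fin (c (i+1) (j+1))) ℂ (C (i+1) (j+1)) :=
    fun i j => (finBasis ℂ _).reindex (finCongr (hc (i+1) (j+1)).symm)
  have hCspan : ∀ i j : ℕ, span ℂ (Set.range (fun k => ((bas i j k : E)))) = C (i+1) (j+1) := by
    intro i j
    have h1 : Submodule.map (C (i+1) (j+1)).subtype (span ℂ (Set.range (bas i j)))
        = C (i+1) (j+1) := by
      rw [Basis.span_eq, Submodule.map_subtype_top]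
    rw [Submodule.map_span, ← Set.range_comp] at h1
    exact h1
  let ι : Type := Σ _ij : Fin (N+1) × Fin (N+1), Fin (c ((_ij.1 : ℕ)+1) ((_ij.2 : ℕ)+1))
  let e : ι → E := fun k => (bas (k.1.1 : ℕ) (k.1.2 : ℕ) k.2 : E)
  let a : ι → ℕ := fun k => (k.1.1 : ℕ)
  let b : ι → ℕ := fun k => (k.1.2 : ℕ)
  have heC : ∀ k : ι, e k ∈ C (a k + 1) (b k + 1) := fun k => (bas _ _ k.2).2
  have haN : ∀ k : ι, a k ≤ N := fun k => Nat.lt_succ_iff.mp k.1.1.isLt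
  have hbN : ∀ k : ι, b k ≤ N := fun k => Nat.lt_succ_iff.mp k.1.2.isLt
  -- forward inclusion
  have key : ∀ n p q, p + q = n → p ≤ N → q ≤ N →
      P (p+1) (q+1) ≤ span ℂ (e '' {k | a k ≤ p ∧ b k ≤ q}) := by
    intro n
    induction n using Nat.strong_induction_on with
    | _ n ih =>
      intro p q hpq hpN hqN
      subst hpq
      rw [← hC2 (p+1) (q+1)]
      apply sup_le
      · rw [hB, Nat.add_sub_cancel, Nat.add_sub_cancel]
        apply sup_le
        · cases p with
          | zero => rw [hP0]; exact bot_le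
          | succ p' =>
            refine (ih (p' + q) (by omega) p' q rfl (by omega) hqN).trans
              (Submodule.span_mono (Set.image_mono ?_))
            exact fun k hk => ⟨hk.1.trans (Nat.le_succ _), hk.2⟩
        · cases q with
          | zero => rw [hP0']; exact bot_le
          | succ q' =>
            refine (ih (p + q') (by omega) p q' rfl hpN (by omega)).trans
              (Submodule.span_mono (Set.image_mono ?_))
            exact fun k hk => ⟨hk.1, hk.2.trans (Nat.le_succ _)⟩
      · rw [← hCspan p q]
        refine Submodule.span_le.mpr ?_
        rintro x ⟨k, rfl⟩
        exact Submodule.subset_span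
          ⟨⟨(⟨p, Nat.lt_succ_of_le hpN⟩, ⟨q, Nat.lt_succ_of_le hqN⟩), k⟩, ⟨le_rfl, le_rfl⟩, rfl⟩
  -- reverse inclusion
  have rev : ∀ p q : ℕ, span ℂ (e '' {k | a k ≤ p ∧ b k ≤ q}) ≤ F p ⊓ G q := by
    intro p q
    refine Submodule.span_le.mpr ?_
    rintro x ⟨k, ⟨hk1, hk2⟩, rfl⟩
    have h1 : e k ∈ P (a k + 1) (b k + 1) := hC1 _ _ (heC k)
    rw [hP, hF's, hG's] at h1
    exact inf_le_inf (hF hk1) (hG hk2) h1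
  -- stabilization
  have hFsta : ∀ p, F p = F (min p N) := by
    intro p
    rcases le_total p N with h | h
    · rw [min_eq_left h]
    · rw [min_eq_right h, hFN]
      exact eq_top_iff.mpr (hFN ▸ hF h)
  have hGsta : ∀ q, G q = G (min q N) := by
    intro q
    rcases le_total q N with h | h
    · rw [min_eq_left h]
    · rw [min_eq_right h, hGN]
      exact eq_top_iff.mpr (hGN ▸ hG h)
  -- the adapted property
  have main : ∀ p q : ℕ, F p ⊓ G q = span ℂ (e '' {k | a k ≤ p ∧ b k ≤ q}) := by
    intro p q
    have hset : {k : ι | a k ≤ p ∧ b k ≤ q} = {k | a k ≤ min p N ∧ b k ≤ min q N} := by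
      ext k
      simp only [Set.mem_setOf_eq]
      constructor
      · exact fun h => ⟨le_min h.1 (haN k), le_min h.2 (hbN k)⟩
      · exact fun h => ⟨h.1.trans (min_le_left _ _), h.2.trans (min_le_left _ _)⟩
    rw [hFsta p, hGsta q, hset]
    refine le_antisymm ?_ (rev _ _)
    have h2 := key (min p N + min q N) (min p N) (min q N) rfl (min_le_right _ _)
      (min_le_right _ _)
    rw [hP, hF's, hG's] at h2
    exact h2
  -- the basis
  have hspanE : ⊤ ≤ span ℂ (Set.range e) := by
    have h1 := main N N
    rw [hFN, hGN, top_inf_eq] at h1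
    have hset : {k : ι | a k ≤ N ∧ b k ≤ N} = Set.univ :=
      Set.eq_univ_of_forall fun k => ⟨haN k, hbN k⟩
    rw [hset, Set.image_univ] at h1
    exact h1.le
  have hcard : Fintype.card ι = finrank ℂ E := by
    rw [Fintype.card_sigma, Fintype.sum_prod_type]
    simp only [Fintype.card_fin]
    rw [Fin.sum_univ_eq_sum_range (fun i => ∑ j : Fin (N+1), c (i+1) ((j : ℕ)+1)) (N+1)]
    rw [← htot]
    exact Finset.sum_congr rfl fun i _ => Fin.sum_univ_eq_sum_range (fun j => c (i+1) (j+1)) (N+1)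
  refine ⟨ι, inferInstance, basisOfTopLeSpanOfCardEqFinrank e hspanE hcard, a, b, ?_⟩
  intro p q
  rw [coe_basisOfTopLeSpanOfCardEqFinrank]
  exact main p q

open scoped TensorProduct

theorem my_smul_li {R M ι : Type*} [CommRing R] [IsDomain R] [AddCommGroup M] [Module R M]
    {v : ι → M} (hv : LinearIndependent R v) (cc : ι → R) (hc : ∀ i, cc i ≠ 0) :
    LinearIndependent R (fun i => cc i • v i) := by
  rw [linearIndependent_iff'] at hv ⊢
  intro s g hg i hi
  have h1 := hv s (fun i => g i * cc i) ?_ i hi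
  · exact (mul_eq_zero.mp h1).resolve_right (hc i)
  · rw [← hg]
    exact Finset.sum_congr rfl fun j _ => (mul_smul _ _ _)


end Aux

set_option maxHeartbeats 1000000 in
/-- If `E` is a finite-dimensional complex vector space equipped with two
ascending exhaustive filtrations `'F` and `''F`, then the Rees module of the bifiltration
`F_{i,j}E = 'F_i E ∩ ''F_j E` is a free `ℂ[τ₁,τ₂]`-module of rank `dim E`. -/
theorem rees_module_free_of_two_filtrations {E : Type*} [AddCommGroup E] [Module ℂ E]
    [FiniteDimensional ℂ E]
    (F G : ℕ → Submodule ℂ E) (hF : Monotone F) (hG : Monotone G)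
    (hFexh : ⨆ i, F i = ⊤) (hGexh : ⨆ j, G j = ⊤) :
    Nonempty (Module.Basis (Fin (Module.finrank ℂ E)) (MvPolynomial (Fin 2) ℂ) (reesModule F G)) := by
  classical
  obtain ⟨ι, _, e, a, b, hada⟩ := my_exists_adapted_basis F G hF hG hFexh hGexh
  let R := MvPolynomial (Fin 2) ℂ
  let m : ℕ → ℕ → R := fun i j =>
    MvPolynomial.monomial (Finsupp.single 0 i + Finsupp.single 1 j) (1 : ℂ)
  have hm0 : ∀ i j, m i j ≠ 0 := fun i j => by
    show MvPolynomial.monomial _ (1:ℂ) ≠ 0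
    rw [Ne, MvPolynomial.monomial_eq_zero]
    exact one_ne_zero
  have hmul : ∀ i j i' j', m i j * m i' j' = m (i+i') (j+j') := by
    intro i j i' j'
    have hs : (Finsupp.single (0:Fin 2) i + Finsupp.single 1 j) +
        (Finsupp.single 0 i' + Finsupp.single 1 j')
        = Finsupp.single 0 (i+i') + Finsupp.single 1 (j+j') := by
      rw [Finsupp.single_add, Finsupp.single_add]
      exact add_add_add_comm _ _ _ _
    show MvPolynomial.monomial _ (1:ℂ) * MvPolynomial.monomial _ (1:ℂ)
      = MvPolynomial.monomial (Finsupp.single 0 (i+i') + Finsupp.single 1 (j+j')) (1:ℂ)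
    rw [MvPolynomial.monomial_mul, one_mul, hs]
  let w : ι → R ⊗[ℂ] E := fun k => m (a k) (b k) ⊗ₜ[ℂ] e k
  let β : Module.Basis ι R (R ⊗[ℂ] E) := Algebra.TensorProduct.basis R e
  have hw : ∀ k, w k = m (a k) (b k) • β k := fun k =>
    (Algebra.TensorProduct.basis_repr_symm_apply' e _ k).symm
  have hli : LinearIndependent R w := by
    rw [show w = fun k => m (a k) (b k) • β k from funext hw]
    exact my_smul_li β.linearIndependent _ (fun k => hm0 _ _)
  have hmem : ∀ k, e k ∈ F (a k) ⊓ G (b k) := by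
    intro k
    rw [hada (a k) (b k)]
    exact Submodule.subset_span ⟨k, ⟨le_rfl, le_rfl⟩, rfl⟩
  have hspan : Submodule.span R (Set.range w) = reesModule F G := by
    apply le_antisymm
    · refine Submodule.span_le.mpr ?_
      rintro x ⟨k, rfl⟩
      exact Submodule.subset_span ⟨a k, b k, e k, hmem k, rfl⟩
    · refine Submodule.span_le.mpr ?_
      rintro x ⟨i, j, v, hv, rfl⟩
      have hv' : v ∈ Submodule.span ℂ (⇑e '' {k | a k ≤ i ∧ b k ≤ j}) := by
        rw [← hada]; exact hv
      have main : ∀ u ∈ Submodule.span ℂ (⇑e '' {k | a k ≤ i ∧ b k ≤ j}),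
          (MvPolynomial.monomial (Finsupp.single 0 i + Finsupp.single 1 j) (1:ℂ)) ⊗ₜ[ℂ] u
            ∈ Submodule.span R (Set.range w) := by
        intro u hu
        induction hu using Submodule.span_induction with
        | mem x hx =>
          obtain ⟨k, ⟨hk1, hk2⟩, rfl⟩ := hx
          show m i j ⊗ₜ[ℂ] (e k) ∈ _
          have heq : m i j ⊗ₜ[ℂ] (e k) = m (i - a k) (j - b k) • w k := by
            show _ = m (i - a k) (j - b k) • (m (a k) (b k) ⊗ₜ[ℂ] e k)
            rw [TensorProduct.smul_tmul', smul_eq_mul, hmul,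
              Nat.sub_add_cancel hk1, Nat.sub_add_cancel hk2]
          rw [heq]
          exact Submodule.smul_mem _ _ (Submodule.subset_span ⟨k, rfl⟩)
        | zero =>
          rw [TensorProduct.tmul_zero]
          exact Submodule.zero_mem _
        | add x y _ _ hx hy =>
          rw [TensorProduct.tmul_add]
          exact Submodule.add_mem _ hx hy
        | smul r x _ hx =>
          rw [TensorProduct.tmul_smul]
          exact Submodule.smul_of_tower_mem _ r hx
      exact main v hv'
  have hcard : Fintype.card ι = Module.finrank ℂ E := (Module.finrank_eq_card_basis e).symm
  exact ⟨((Module.Basis.span hli).map (LinearEquiv.ofEq _ _ hspan)).reindex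
    (Fintype.equivFinOfCardEq hcard)⟩
end

section
/- Let g be a complex reductive Lie algebra with invariant form, t a Cartan subalgebra, and G̃ = {(b,x,y) : b Borel, x,y ∈ b}. Identify T*(B × g × t) with its fibers using the form. Then the conormal variety Λ to the image of the embedding ε : g̃ → B × g × t, (b,x) ↦ (b, x, x mod [b,b]), has fiber over the point (b, x, x mod [b,b]) equal to {(−[x,y], y, y mod [b,b]) : y ∈ b} ⊂ [b,b] × g × t. In particular the map (b,x,y) ↦ ((b,[x,y]), (x,y), (ν(b,x), ν(b,y))) is an isomorphism from G̃ onto Λ. -/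
/-- The derived subspace `[b,b]` of a Lie subalgebra `b`, as a submodule of the ambient
Lie algebra. -/
noncomputable def derivedSubmodule {g : Type*} [LieRing g] [LieAlgebra ℂ g]
    (b : LieSubalgebra ℂ g) : Submodule ℂ g :=
  Submodule.span ℂ {z : g | ∃ u ∈ b, ∃ v ∈ b, z = ⁅u, v⁆}

/-- Let `g` be a complex reductive Lie algebra with invariant form `B`, `b` a
Borel subalgebra with Cartan complement `t` (so `b = t ⊕ [b,b]`, with `[b,b] = b^⊥` relative to
`B`), and `x ∈ b`.  Identify the cotangent space of the flag variety at `b` with `[b,b]` and the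
dual of `t` with `t` via `B`.  Then the fiber over `(b, x, x mod [b,b])` of the conormal variety
`Λ` to the image of `ε : g̃ → B × g × t`, i.e. the set of triples `(n, y, h) ∈ [b,b] × g × t`
satisfying the conormality equation
`⟨α, n⟩ + ⟨[α,x] + β, y⟩ + ⟨β mod [b,b], h⟩ = 0` for all `α ∈ g`, `β ∈ b`,
equals `{(−[x,y], y, y mod [b,b]) : y ∈ b}`.  (Here `h = the t-component of -y`, i.e.
`y + h ∈ [b,b]`; in particular `(b,x,y) ↦ ((b,[x,y]), (x,y), (ν(b,x), ν(b,y)))` identifies `G̃`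
with `Λ` fiberwise.) -/
theorem conormal_fiber_of_grothendieck_springer
    {g : Type*} [LieRing g] [LieAlgebra ℂ g]
    (B : LinearMap.BilinForm ℂ g)
    (hsymm : ∀ a b : g, B a b = B b a)
    (hnd : B.Nondegenerate)
    (hinv : ∀ a b c : g, B ⁅a, b⁆ c = B a ⁅b, c⁆)
    (b : LieSubalgebra ℂ g)
    (hsolv : LieAlgebra.IsSolvable ↥b)
    (hmax : ∀ b' : LieSubalgebra ℂ g, LieAlgebra.IsSolvable ↥b' → b ≤ b' → b' = b)
    (t : Submodule ℂ g) (htb : t ≤ b.toSubmodule)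
    (hdirect : b.toSubmodule = t ⊔ derivedSubmodule b ∧ t ⊓ derivedSubmodule b = ⊥)
    (horth : ∀ z ∈ derivedSubmodule b, ∀ β ∈ b, B z β = 0)
    (hperp : ∀ z : g, (∀ β ∈ b, B z β = 0) → z ∈ derivedSubmodule b)
    (x : g) (hx : x ∈ b) :
    ∀ (n y h : g), n ∈ derivedSubmodule b → h ∈ t →
      ((∀ α : g, ∀ β ∈ b, B n α + B y (⁅α, x⁆ + β) + B h β = 0) ↔
        (y ∈ b ∧ n = -⁅x, y⁆ ∧ y + h ∈ derivedSubmodule b)) := by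
  intro n y h hn ht
  have hderived : derivedSubmodule b ≤ b.toSubmodule :=
    Submodule.span_le.mpr (by rintro z ⟨u, hu, v, hv, rfl⟩; exact b.lie_mem hu hv)
  have key : ∀ α : g, B y ⁅α, x⁆ = B ⁅x, y⁆ α := by
    intro α
    rw [← hinv y α x, hsymm, hinv]
  constructor
  · intro H
    have hn' : n = -⁅x, y⁆ := by
      have hz : ∀ α : g, (B (n + ⁅x, y⁆)) α = 0 := by
        intro α
        have h1 := H α 0 b.zero_mem
        rw [add_zero, map_zero, add_zero, key α] at h1
        rw [map_add, LinearMap.add_apply]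
        linear_combination h1
      exact eq_neg_of_add_eq_zero_left (hnd.1 _ hz)
    have hyh : y + h ∈ derivedSubmodule b := by
      refine hperp _ (fun β hβ => ?_)
      have h2 := H 0 β hβ
      simp only [map_zero, zero_lie, zero_add] at h2
      rw [map_add, LinearMap.add_apply]
      linear_combination h2
    refine ⟨?_, hn', hyh⟩
    have : y + h - h ∈ b.toSubmodule :=
      Submodule.sub_mem _ (hderived hyh) (htb ht)
    simpa using this
  · rintro ⟨hy, rfl, hyh⟩ α β hβ
    have h3 : B y β + B h β = 0 := by
      have := horth _ hyh β hβ
      rw [map_add, LinearMap.add_apply] at this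
      linear_combination this
    rw [map_add, map_neg, LinearMap.neg_apply]
    linear_combination key α + h3
end

section
/- Let V = ℂⁿ and (x,y) a commuting pair of endomorphisms admitting a cyclic vector (a vector v with ℂ⟨x,y⟩·v = V). Then all cyclic vectors for (x,y) form a single orbit under the group of invertible elements of g_{x,y}, and this orbit is the unique Zariski open dense G_{x,y}-orbit in V. -/
/-- `v` is a cyclic vector for the pair of endomorphisms `(x, y)` of `V = ℂⁿ`:
`ℂ⟨x,y⟩ · v = V`. -/
def IsCyclicVectorPair {n : ℕ} (x y : Module.End ℂ (Fin n → ℂ)) (v : Fin n → ℂ) : Prop :=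
  ∀ u : Fin n → ℂ, ∃ a ∈ Algebra.adjoin ℂ ({x, y} : Set (Module.End ℂ (Fin n → ℂ))), a v = u

/-- The orbit of a vector under the group `G_{x,y}` of invertible elements of the joint
centralizer `g_{x,y}`. -/
def centralizerOrbit {n : ℕ} (x y : Module.End ℂ (Fin n → ℂ)) (v : Fin n → ℂ) :
    Set (Fin n → ℂ) :=
  {w | ∃ a : Module.End ℂ (Fin n → ℂ),
    a ∈ Subalgebra.centralizer ℂ ({x, y} : Set (Module.End ℂ (Fin n → ℂ))) ∧ IsUnit a ∧ a v = w}

open Module Polynomial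

section Helpers

variable {n : ℕ} {x y : Module.End ℂ (Fin n → ℂ)}

private lemma commute_centralizer_adjoin {a b : Module.End ℂ (Fin n → ℂ)}
    (ha : a ∈ Subalgebra.centralizer ℂ ({x, y} : Set (Module.End ℂ (Fin n → ℂ))))
    (hb : b ∈ Algebra.adjoin ℂ ({x, y} : Set (Module.End ℂ (Fin n → ℂ)))) :
    Commute a b :=
  Algebra.commute_of_mem_adjoin_of_forall_mem_commute hb fun c hc =>
    ((Subalgebra.mem_centralizer_iff ℂ).mp ha c hc).symm

private lemma adjoin_mem_centralizer (hxy : Commute x y) {b : Module.End ℂ (Fin n → ℂ)}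
    (hb : b ∈ Algebra.adjoin ℂ ({x, y} : Set (Module.End ℂ (Fin n → ℂ)))) :
    b ∈ Subalgebra.centralizer ℂ ({x, y} : Set (Module.End ℂ (Fin n → ℂ))) := by
  rw [Subalgebra.mem_centralizer_iff]
  intro g hg
  refine (Algebra.commute_of_mem_adjoin_of_forall_mem_commute hb fun c hc => ?_ : Commute g b)
  simp only [Set.mem_insert_iff, Set.mem_singleton_iff] at hg hc
  rcases hg with h1 | h1 <;> rcases hc with h2 | h2 <;> rw [h1, h2]
  exacts [Commute.refl x, hxy, hxy.symm, Commute.refl y]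

private lemma mem_orbit_self (u : Fin n → ℂ) : u ∈ centralizerOrbit x y u :=
  ⟨1, one_mem _, isUnit_one, rfl⟩

private lemma orbit_symm {u w : Fin n → ℂ} (h : w ∈ centralizerOrbit x y u) :
    u ∈ centralizerOrbit x y w := by
  obtain ⟨a, hac, hau, rfl⟩ := h
  refine ⟨↑hau.unit⁻¹, ?_, (hau.unit⁻¹).isUnit, ?_⟩
  · rw [Subalgebra.mem_centralizer_iff] at hac ⊢
    intro g hg
    have h1 : Commute g (hau.unit : Module.End ℂ (Fin n → ℂ)) := by
      rw [IsUnit.unit_spec]; exact hac g hg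
    exact h1.units_inv_right
  · calc (↑hau.unit⁻¹ : Module.End ℂ (Fin n → ℂ)) (a u)
        = ((↑hau.unit⁻¹ * ↑hau.unit : Module.End ℂ (Fin n → ℂ))) u := by
          rw [hau.unit_spec]; rfl
      _ = u := by rw [hau.unit.inv_mul]; rfl

private lemma orbit_trans {u w z : Fin n → ℂ} (h1 : w ∈ centralizerOrbit x y u)
    (h2 : z ∈ centralizerOrbit x y w) : z ∈ centralizerOrbit x y u := by
  obtain ⟨a, hac, hau, rfl⟩ := h1
  obtain ⟨b, hbc, hbu, rfl⟩ := h2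
  exact ⟨b * a, mul_mem hbc hac, hbu.mul hau, rfl⟩

private lemma orbit_eq_of_mem {u w : Fin n → ℂ} (h : w ∈ centralizerOrbit x y u) :
    centralizerOrbit x y w = centralizerOrbit x y u :=
  Set.ext fun _ => ⟨fun hz => orbit_trans h hz, fun hz => orbit_trans (orbit_symm h) hz⟩

end Helpers

set_option maxHeartbeats 1600000 in
set_option synthInstance.maxHeartbeats 400000 in
/-- Let `V = ℂⁿ` and `(x, y)` a commuting pair of endomorphisms admitting a
cyclic vector `v`.  Then all cyclic vectors for `(x, y)` form a single orbit under the group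
`G_{x,y}` of invertible elements of the centralizer `g_{x,y}`, and this orbit is the unique
open dense `G_{x,y}`-orbit in `V`. -/
theorem cyclic_vectors_form_unique_open_dense_orbit {n : ℕ}
    (x y : Module.End ℂ (Fin n → ℂ)) (hxy : Commute x y)
    (v : Fin n → ℂ) (hv : IsCyclicVectorPair x y v) :
    {w | IsCyclicVectorPair x y w} = centralizerOrbit x y v ∧
    IsOpen {w | IsCyclicVectorPair x y w} ∧
    Dense {w | IsCyclicVectorPair x y w} ∧
    ∀ v' : Fin n → ℂ, IsOpen (centralizerOrbit x y v') → Dense (centralizerOrbit x y v') →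
      centralizerOrbit x y v' = centralizerOrbit x y v := by
  classical
  -- the evaluation map from the adjoined algebra
  set A := Algebra.adjoin ℂ ({x, y} : Set (Module.End ℂ (Fin n → ℂ))) with hA
  let e : A →ₗ[ℂ] (Fin n → ℂ) :=
    { toFun := fun a => (a : Module.End ℂ (Fin n → ℂ)) v
      map_add' := fun a b => rfl
      map_smul' := fun c a => rfl }
  have hesurj : Function.Surjective e := by
    intro u
    obtain ⟨a, ha, hav⟩ := hv u
    exact ⟨⟨a, ha⟩, hav⟩
  have heinj : Function.Injective e := by
    rw [injective_iff_map_eq_zero]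
    intro a ha0
    have : ∀ u, (a : Module.End ℂ (Fin n → ℂ)) u = 0 := by
      intro u
      obtain ⟨c, hc, rfl⟩ := hv u
      have hcom : Commute (a : Module.End ℂ (Fin n → ℂ)) c :=
        commute_centralizer_adjoin (adjoin_mem_centralizer hxy a.2) hc
      calc (a : Module.End ℂ (Fin n → ℂ)) (c v)
          = ((a : Module.End ℂ (Fin n → ℂ)) * c) v := rfl
        _ = (c * (a : Module.End ℂ (Fin n → ℂ))) v := by rw [hcom]
        _ = c ((a : Module.End ℂ (Fin n → ℂ)) v) := rfl
        _ = 0 := by rw [show (a : Module.End ℂ (Fin n → ℂ)) v = 0 from ha0]; exact map_zero c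
    ext1
    exact LinearMap.ext this
  let E : A ≃ₗ[ℂ] (Fin n → ℂ) := LinearEquiv.ofBijective e ⟨heinj, hesurj⟩
  let F : (Fin n → ℂ) →ₗ[ℂ] Module.End ℂ (Fin n → ℂ) :=
    (Subalgebra.val A).toLinearMap ∘ₗ (E.symm : (Fin n → ℂ) →ₗ[ℂ] A)
  have hFmem : ∀ w, F w ∈ A := fun w => (E.symm w).2
  have hFv : ∀ w, (F w) v = w := fun w => E.apply_symm_apply w
  have hFc : ∀ w, ∀ c ∈ A, c w = (F w) (c v) := by
    intro w c hc
    have hcom : Commute c (F w) :=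
      commute_centralizer_adjoin (adjoin_mem_centralizer hxy hc) (hFmem w)
    calc c w = c ((F w) v) := by rw [hFv]
      _ = (c * F w) v := rfl
      _ = (F w * c) v := by rw [hcom]
      _ = (F w) (c v) := rfl
  have hchar : ∀ w, IsCyclicVectorPair x y w ↔ IsUnit (F w) := by
    intro w
    constructor
    · intro hw
      have hsurj : Function.Surjective (F w) := by
        intro u
        obtain ⟨c, hc, hcw⟩ := hw u
        exact ⟨c v, by rw [← hFc w c hc, hcw]⟩
      have hinj : Function.Injective (F w) :=
        LinearMap.injective_iff_surjective.mpr hsurj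
      exact (Module.End.isUnit_iff (F w)).mpr ⟨hinj, hsurj⟩
    · intro hu u
      obtain ⟨c, hc, hcv⟩ := hv ((↑hu.unit⁻¹ : Module.End ℂ (Fin n → ℂ)) u)
      refine ⟨c, hc, ?_⟩
      rw [hFc w c hc, hcv]
      calc (F w) ((↑hu.unit⁻¹ : Module.End ℂ (Fin n → ℂ)) u)
          = ((↑hu.unit * ↑hu.unit⁻¹ : Module.End ℂ (Fin n → ℂ))) u := by
            rw [hu.unit_spec]; rfl
        _ = u := by rw [hu.unit.mul_inv]; rfl
  have horb : {w | IsCyclicVectorPair x y w} = centralizerOrbit x y v := by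
    ext w
    constructor
    · intro hw
      exact ⟨F w, adjoin_mem_centralizer hxy (hFmem w), (hchar w).mp hw, hFv w⟩
    · rintro ⟨a, hac, hau, rfl⟩
      intro u
      obtain ⟨c, hcA, hcv⟩ := hv ((↑hau.unit⁻¹ : Module.End ℂ (Fin n → ℂ)) u)
      refine ⟨c, hcA, ?_⟩
      have hcom : Commute a c := commute_centralizer_adjoin hac hcA
      calc c (a v) = (c * a) v := rfl
        _ = (a * c) v := by rw [← hcom]
        _ = a (c v) := rfl
        _ = a ((↑hau.unit⁻¹ : Module.End ℂ (Fin n → ℂ)) u) := by rw [hcv]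
        _ = ((↑hau.unit * ↑hau.unit⁻¹ : Module.End ℂ (Fin n → ℂ))) u := by
            rw [hau.unit_spec]; rfl
        _ = u := by rw [hau.unit.mul_inv]; rfl
  -- determinant function
  let g : (Fin n → ℂ) → ℂ := fun w => (LinearMap.toMatrixAlgEquiv' (F w)).det
  have hdet : ∀ w, IsCyclicVectorPair x y w ↔ g w ≠ 0 := by
    intro w
    rw [hchar w]
    constructor
    · intro h
      exact isUnit_iff_ne_zero.mp
        ((Matrix.isUnit_iff_isUnit_det _).mp (h.map LinearMap.toMatrixAlgEquiv'))
    · intro h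
      have h1 : IsUnit (LinearMap.toMatrixAlgEquiv' (F w)) :=
        (Matrix.isUnit_iff_isUnit_det _).mpr (isUnit_iff_ne_zero.mpr h)
      simpa using h1.map (LinearMap.toMatrixAlgEquiv' (R := ℂ) (n := Fin n)).symm
  have hgcont : Continuous g := by
    have hFmcont : Continuous fun w => LinearMap.toMatrixAlgEquiv' (F w) :=
      ((LinearMap.toMatrixAlgEquiv' (R := ℂ) (n := Fin n)).toLinearMap ∘ₗ F).continuous_of_finiteDimensional
    exact hFmcont.matrix_det
  have hSopen : IsOpen {w | IsCyclicVectorPair x y w} := by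
    have hset : {w | IsCyclicVectorPair x y w} = g ⁻¹' {(0 : ℂ)}ᶜ := by
      ext w; simpa using hdet w
    rw [hset]
    exact isOpen_compl_singleton.preimage hgcont
  have hSdense : Dense {w | IsCyclicVectorPair x y w} := by
    rw [Metric.dense_iff]
    intro w₀ r hr
    -- polynomial along the line from w₀ to v
    set M₀ := LinearMap.toMatrixAlgEquiv' (F w₀) with hM₀
    set Md := LinearMap.toMatrixAlgEquiv' (F (v - w₀)) with hMd
    set q : ℂ[X] := Matrix.det (Matrix.of fun i j => C (M₀ i j) + C (Md i j) * X) with hq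
    have heval : ∀ t : ℂ, q.eval t = g (w₀ + t • (v - w₀)) := by
      intro t
      have h1 : F (w₀ + t • (v - w₀)) = F w₀ + t • F (v - w₀) := by
        rw [map_add, map_smul]
      have h2 : LinearMap.toMatrixAlgEquiv' (F (w₀ + t • (v - w₀))) = M₀ + t • Md := by
        rw [h1, map_add, map_smul]
      show q.eval t = _
      rw [show g (w₀ + t • (v - w₀)) = (M₀ + t • Md).det from by rw [← h2]]
      have hqe : q.eval t = (Polynomial.evalRingHom t) q := rfl
      rw [hqe, hq, RingHom.map_det]
      congr 1
      ext i j
      simp only [RingHom.mapMatrix_apply, Matrix.map_apply, Matrix.of_apply, coe_evalRingHom, eval_add, eval_mul,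
        eval_C, eval_X, Matrix.add_apply, Matrix.smul_apply, smul_eq_mul]
      ring
    have hq0 : q ≠ 0 := by
      intro h
      have h1 := heval 1
      rw [h] at h1
      simp only [Polynomial.eval_zero] at h1
      have h2 : w₀ + (1 : ℂ) • (v - w₀) = v := by
        rw [one_smul]; abel
      rw [h2] at h1
      exact (hdet v).mp hv h1.symm
    have hroots : {t : ℂ | q.IsRoot t}.Finite := Polynomial.finite_setOf_isRoot hq0
    set δ := r / (‖v - w₀‖ + 1) with hδdef
    have hnorm_pos : (0 : ℝ) < ‖v - w₀‖ + 1 := by positivity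
    have hδ : 0 < δ := div_pos hr hnorm_pos
    have hTinf : ((fun s : ℝ => (s : ℂ)) '' Set.Ioo 0 δ).Infinite :=
      (Set.Ioo_infinite hδ).image (Complex.ofReal_injective.injOn)
    obtain ⟨t, htT, htroot⟩ := (hTinf.diff hroots).nonempty
    obtain ⟨s, hs, rfl⟩ := htT
    refine ⟨w₀ + (s : ℂ) • (v - w₀), ?_, ?_⟩
    · rw [Metric.mem_ball, dist_eq_norm]
      have : w₀ + (s : ℂ) • (v - w₀) - w₀ = (s : ℂ) • (v - w₀) := by abel
      rw [this, norm_smul, Complex.norm_real, Real.norm_eq_abs, abs_of_pos hs.1]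
      calc s * ‖v - w₀‖ ≤ s * (‖v - w₀‖ + 1) := by nlinarith [hs.1]
        _ < δ * (‖v - w₀‖ + 1) := by nlinarith [hs.2, hnorm_pos]
        _ = r := div_mul_cancel₀ r hnorm_pos.ne'
    · refine (hdet _).mpr ?_
      rw [← heval]
      exact fun h => htroot h
  refine ⟨horb, hSopen, hSdense, ?_⟩
  intro v' hopen' hdense'
  have hvS : v ∈ centralizerOrbit x y v := mem_orbit_self v
  have hSopen' : IsOpen (centralizerOrbit x y v) := horb ▸ hSopen
  obtain ⟨w, hw, hw'⟩ := hdense'.inter_open_nonempty _ hSopen' ⟨v, hvS⟩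
  exact (orbit_eq_of_mem hw').symm.trans (orbit_eq_of_mem hw)
end
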